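/- Let F : D^{n+1} → D be holomorphic such that for no automorphism φ of D does F(z,w) = φ(w) identically. If F(z₁,w₁) = w₁ and F(z₁,w₂) = w₂ with w₁ ≠ w₂ for the same z₁ ∈ Dⁿ, then a contradiction follows; equivalently, for such F, each z ∈ Dⁿ admits at most one w ∈ D with F(z,w) = w. -/

import Mathlib

open Metric Set
open scoped Topology

/-- The open unit polydisk in `ℂⁿ`. -/
def polyDisk (n : ℕ) : Set (Fin n → ℂ) := {z | ∀ i, ‖z i‖ < 1}

/-- `φ` is a holomorphic automorphism of the unit disk. -/
def IsDiskAut (φ : ℂ → ℂ) : Prop :=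
  DifferentiableOn ℂ φ (ball (0 : ℂ) 1) ∧
  MapsTo φ (ball (0 : ℂ) 1) (ball (0 : ℂ) 1) ∧
  ∃ ψ : ℂ → ℂ, DifferentiableOn ℂ ψ (ball (0 : ℂ) 1) ∧
    MapsTo ψ (ball (0 : ℂ) 1) (ball (0 : ℂ) 1) ∧
    (∀ w ∈ ball (0 : ℂ) 1, ψ (φ w) = w) ∧
    (∀ w ∈ ball (0 : ℂ) 1, φ (ψ w) = w)

namespace PolydiskFixedPoint

open Complex

/-- The Möbius transformation of the disk sending `a` to `0`. -/
noncomputable def mob (a ζ : ℂ) : ℂ := (ζ - a) / (1 - (starRingEnd ℂ) a * ζ)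

lemma normSq_lt_one {a : ℂ} (ha : ‖a‖ < 1) : normSq a < 1 := by
  have : normSq a = ‖a‖ ^ 2 := by rw [Complex.normSq_eq_norm_sq]
  nlinarith [norm_nonneg a]

lemma mob_den_ne {a ζ : ℂ} (ha : ‖a‖ < 1) (hζ : ‖ζ‖ < 1) :
    1 - (starRingEnd ℂ) a * ζ ≠ 0 := by
  intro h
  have : ‖(starRingEnd ℂ) a * ζ‖ < 1 := by
    rw [norm_mul, RCLike.norm_conj]
    nlinarith [norm_nonneg a, norm_nonneg ζ]
  rw [sub_eq_zero] at h
  rw [← h] at this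
  simp at this

lemma mob_normSq_identity (a ζ : ℂ) :
    normSq (1 - (starRingEnd ℂ) a * ζ) - normSq (ζ - a) =
      (1 - normSq a) * (1 - normSq ζ) := by
  simp [normSq_apply, Complex.sub_re, Complex.sub_im, Complex.mul_re, Complex.mul_im]
  ring

lemma mob_mem {a ζ : ℂ} (ha : ‖a‖ < 1) (hζ : ‖ζ‖ < 1) : ‖mob a ζ‖ < 1 := by
  have hden := mob_den_ne ha hζ
  have hpos : 0 < normSq (1 - (starRingEnd ℂ) a * ζ) := normSq_pos.2 hden
  have hid := mob_normSq_identity a ζ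
  have h1 := normSq_lt_one ha
  have h2 := normSq_lt_one hζ
  have hlt : normSq (ζ - a) < normSq (1 - (starRingEnd ℂ) a * ζ) := by nlinarith
  have hms : normSq (mob a ζ) < 1 := by
    rw [mob, normSq_div, div_lt_one hpos]
    exact hlt
  have hsq : normSq (mob a ζ) = ‖mob a ζ‖ ^ 2 := by
    rw [Complex.normSq_eq_norm_sq]
  nlinarith [norm_nonneg (mob a ζ)]

lemma mob_self (a : ℂ) : mob a a = 0 := by simp [mob]

lemma mob_mob {a ζ : ℂ} (ha : ‖a‖ < 1) (hζ : ‖ζ‖ < 1) :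
    mob (-a) (mob a ζ) = ζ := by
  have hden := mob_den_ne ha hζ
  have key : 1 - (starRingEnd ℂ) (-a) * mob a ζ
      = (1 - (starRingEnd ℂ) a * a) / (1 - (starRingEnd ℂ) a * ζ) := by
    rw [mob, map_neg]
    field_simp
    ring
  have haa : (1 : ℂ) - (starRingEnd ℂ) a * a ≠ 0 := mob_den_ne ha ha
  rw [mob, key, mob]
  rw [div_div_eq_mul_div, sub_neg_eq_add, div_add' _ _ _ hden, div_mul_cancel₀ _ hden, div_eq_iff haa]
  ring

lemma mob_differentiableAt {a ζ : ℂ} (ha : ‖a‖ < 1) (hζ : ‖ζ‖ < 1) :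
    DifferentiableAt ℂ (mob a) ζ := by
  apply DifferentiableAt.div
  · fun_prop
  · fun_prop
  · exact mob_den_ne ha hζ

lemma mob_hasDerivAt {a : ℂ} (ha : ‖a‖ < 1) :
    HasDerivAt (mob a) (1 - (starRingEnd ℂ) a * a)⁻¹ a := by
  have hden := mob_den_ne ha ha
  have h1 : HasDerivAt (fun ζ : ℂ => ζ - a) 1 a := (hasDerivAt_id a).sub_const a
  have h2 : HasDerivAt (fun ζ : ℂ => 1 - (starRingEnd ℂ) a * ζ) (-(starRingEnd ℂ) a) a := by
    simpa using ((hasDerivAt_id a).const_mul ((starRingEnd ℂ) a)).const_sub 1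
  have := h1.div h2 hden
  refine this.congr_deriv ?_
  field_simp
  ring

lemma conj_mul_self (a : ℂ) : (starRingEnd ℂ) a * a = (normSq a : ℂ) := by
  rw [mul_comm, Complex.mul_conj]

lemma norm_one_sub_conj_mul_self {a : ℂ} (ha : ‖a‖ < 1) :
    ‖(1 : ℂ) - (starRingEnd ℂ) a * a‖ = 1 - normSq a := by
  rw [conj_mul_self]
  have h1 := normSq_lt_one ha
  have : (1 : ℂ) - (normSq a : ℂ) = ((1 - normSq a : ℝ) : ℂ) := by push_cast; ring
  rw [this, Complex.norm_real, Real.norm_eq_abs, _root_.abs_of_nonneg (by linarith)]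

lemma polyDisk_eq (n : ℕ) : polyDisk n = Set.pi univ (fun _ => ball (0 : ℂ) 1) := by
  ext z
  simp [polyDisk, Set.mem_pi, mem_ball_zero_iff]

lemma isOpen_polyDisk (n : ℕ) : IsOpen (polyDisk n) := by
  rw [polyDisk_eq]
  exact isOpen_set_pi finite_univ (fun i _ => isOpen_ball)

lemma convex_polyDisk (n : ℕ) : Convex ℝ (polyDisk n) := by
  rw [polyDisk_eq]
  exact convex_pi (fun i _ => convex_ball 0 1)

end PolydiskFixedPoint

open PolydiskFixedPoint Complex

/-- If `F` is not an automorphism in the last variable, then each slice has at most one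
fixed point. -/
theorem at_most_one_fixed_point_per_slice (n : ℕ)
    (F : (Fin n → ℂ) × ℂ → ℂ)
    (hF : DifferentiableOn ℂ F (polyDisk n ×ˢ ball (0 : ℂ) 1))
    (hmap : MapsTo F (polyDisk n ×ˢ ball (0 : ℂ) 1) (ball (0 : ℂ) 1))
    (hnotaut : ¬ ∃ φ : ℂ → ℂ, IsDiskAut φ ∧
      ∀ z ∈ polyDisk n, ∀ w ∈ ball (0 : ℂ) 1, F (z, w) = φ w) :
    ∀ z ∈ polyDisk n, ∀ w₁ ∈ ball (0 : ℂ) 1, ∀ w₂ ∈ ball (0 : ℂ) 1,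
      F (z, w₁) = w₁ → F (z, w₂) = w₂ → w₁ = w₂ := by
  intro z hz w₁ hw₁mem w₂ hw₂mem hfix1 hfix2
  by_contra hne
  have hw₁ : ‖w₁‖ < 1 := mem_ball_zero_iff.1 hw₁mem
  have hw₂ : ‖w₂‖ < 1 := mem_ball_zero_iff.1 hw₂mem
  have hw₁' : ‖-w₁‖ < 1 := by rwa [norm_neg]
  set S : Set ((Fin n → ℂ) × ℂ) := polyDisk n ×ˢ ball (0 : ℂ) 1 with hSdef
  have hSopen : IsOpen S := (isOpen_polyDisk n).prod isOpen_ball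
  -- the conjugated map
  set Ft : (Fin n → ℂ) × ℂ → ℂ := fun p => mob w₁ (F (p.1, mob (-w₁) p.2)) with hFtdef
  have hinner : ∀ ζ ∈ polyDisk n, ∀ w : ℂ, ‖w‖ < 1 → (ζ, mob (-w₁) w) ∈ S :=
    fun ζ hζ w hw => Set.mk_mem_prod hζ (mem_ball_zero_iff.2 (mob_mem hw₁' hw))
  have hFval : ∀ ζ ∈ polyDisk n, ∀ w : ℂ, ‖w‖ < 1 → ‖F (ζ, mob (-w₁) w)‖ < 1 :=
    fun ζ hζ w hw => mem_ball_zero_iff.1 (hmap (hinner ζ hζ w hw))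
  have hFtmem : ∀ ζ ∈ polyDisk n, ∀ w : ℂ, ‖w‖ < 1 → ‖Ft (ζ, w)‖ < 1 :=
    fun ζ hζ w hw => mob_mem hw₁ (hFval ζ hζ w hw)
  -- differentiability of Ft on S
  have hFtd : DifferentiableOn ℂ Ft S := by
    intro p hp
    rw [hSdef, Set.mem_prod] at hp
    have hp2 : ‖p.2‖ < 1 := mem_ball_zero_iff.1 hp.2
    have hmd : DifferentiableWithinAt ℂ
        (fun q : (Fin n → ℂ) × ℂ => (q.1, mob (-w₁) q.2)) S p := by
      apply DifferentiableWithinAt.prodMk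
      · exact differentiableAt_fst.differentiableWithinAt
      · exact ((mob_differentiableAt hw₁' hp2).comp p
          differentiableAt_snd).differentiableWithinAt
    have hmapsS : MapsTo (fun q : (Fin n → ℂ) × ℂ => (q.1, mob (-w₁) q.2)) S S := by
      intro q hq
      rw [hSdef, Set.mem_prod] at hq
      exact hinner q.1 hq.1 q.2 (mem_ball_zero_iff.1 hq.2)
    have hcomp : DifferentiableWithinAt ℂ
        (fun q : (Fin n → ℂ) × ℂ => F (q.1, mob (-w₁) q.2)) S p :=
      (hF _ (hinner p.1 hp.1 p.2 hp2)).comp p hmd hmapsS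
    exact (mob_differentiableAt hw₁ (hFval p.1 hp.1 p.2 hp2)).comp_differentiableWithinAt p hcomp
  have hFtAt : ∀ p ∈ S, DifferentiableAt ℂ Ft p :=
    fun p hp => (hFtd p hp).differentiableAt (hSopen.mem_nhds hp)
  -- slice differentiability
  have hsliced : ∀ ζ ∈ polyDisk n, DifferentiableOn ℂ (fun w => Ft (ζ, w)) (ball (0 : ℂ) 1) := by
    intro ζ hζ w hw
    exact ((hFtAt _ (Set.mk_mem_prod hζ hw)).comp w
      ((differentiableAt_const ζ).prodMk differentiableAt_id)).differentiableWithinAt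
  -- derivative of the slice at 0
  have hβderiv : ∀ ζ ∈ polyDisk n,
      HasDerivAt (fun w => Ft (ζ, w)) (fderiv ℂ Ft (ζ, 0) ((0 : Fin n → ℂ), (1 : ℂ))) 0 := by
    intro ζ hζ
    have h0 : ((ζ, (0 : ℂ)) : (Fin n → ℂ) × ℂ) ∈ S :=
      Set.mk_mem_prod hζ (by simp)
    have h1 : HasFDerivAt Ft (fderiv ℂ Ft (ζ, 0)) (ζ, 0) := (hFtAt _ h0).hasFDerivAt
    have h2 : HasDerivAt (fun w : ℂ => ((ζ, w) : (Fin n → ℂ) × ℂ)) ((0 : Fin n → ℂ), (1 : ℂ)) 0 :=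
      (hasDerivAt_const (x := (0 : ℂ)) (c := ζ)).prodMk (hasDerivAt_id 0)
    exact h1.comp_hasDerivAt 0 h2
  set β : (Fin n → ℂ) → ℂ :=
    fun ζ => fderiv ℂ Ft (ζ, 0) ((0 : Fin n → ℂ), (1 : ℂ)) with hβdef
  -- key facts about the slice at z
  have hmob0 : mob (-w₁) 0 = w₁ := by simp [mob]
  have hFtz0 : Ft (z, 0) = 0 := by
    rw [hFtdef]
    simp only [hmob0, hfix1, mob_self]
  set c : ℂ := mob w₁ w₂ with hcdef
  have hcball : ‖c‖ < 1 := mob_mem hw₁ hw₂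
  have hcne : c ≠ 0 := by
    intro h
    rw [hcdef, mob, div_eq_zero_iff] at h
    rcases h with h | h
    · exact hne (sub_eq_zero.1 h).symm
    · exact mob_den_ne hw₁ hw₂ h
  have hFtzc : Ft (z, c) = c := by
    rw [hFtdef]
    simp only [hcdef, mob_mob hw₁ hw₂, hfix2]
  -- Step A: the slice at z is the identity
  have hmapsz : ∀ ζ ∈ polyDisk n, Ft (ζ, 0) = 0 →
      MapsTo (fun w => Ft (ζ, w)) (ball (0 : ℂ) 1) (ball (Ft (ζ, 0)) 1) := by
    intro ζ hζ h0 w hw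
    rw [h0, mem_ball_zero_iff]
    exact hFtmem ζ hζ w (mem_ball_zero_iff.1 hw)
  have hsliceid : ∀ w ∈ ball (0 : ℂ) 1, Ft (z, w) = w := by
    have hds : dslope (fun w => Ft (z, w)) 0 c = 1 := by
      rw [dslope_of_ne _ hcne, slope_def_field, hFtzc, hFtz0]
      field_simp
    have hEq := Complex.affine_of_mapsTo_ball_of_exists_norm_dslope_eq_div
      (hsliced z hz) ((hmapsz z hz hFtz0).mono_right ball_subset_closedBall) (mem_ball_zero_iff.2 hcball)
      (by rw [hds]; norm_num)
    intro w hw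
    have := hEq hw
    simp only [hds, hFtz0, sub_zero, smul_eq_mul, mul_one, zero_add] at this
    exact this
  -- β z = 1
  have hβz : β z = 1 := by
    have h' := hβderiv z hz
    have h'' : (fun w => Ft (z, w)) =ᶠ[nhds (0 : ℂ)] (fun w => w) := by
      filter_upwards [isOpen_ball.mem_nhds (mem_ball_self one_pos)] with w hw
      exact hsliceid w hw
    have hid : HasDerivAt (fun w => Ft (z, w)) 1 0 :=
      (hasDerivAt_id 0).congr_of_eventuallyEq h''
    exact h'.unique hid
  -- Schwarz–Pick bound on β
  have hβle : ∀ ζ ∈ polyDisk n, ‖β ζ‖ ≤ 1 - normSq (Ft (ζ, 0)) := by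
    intro ζ hζ
    have ha : ‖Ft (ζ, 0)‖ < 1 := hFtmem ζ hζ 0 (by norm_num)
    set a : ℂ := Ft (ζ, 0) with hadef
    set g : ℂ → ℂ := fun w => mob a (Ft (ζ, w)) with hgdef
    have hg0 : g 0 = 0 := by rw [hgdef]; simp only [← hadef, mob_self]
    have hgd : DifferentiableOn ℂ g (ball (0 : ℂ) 1) := by
      intro w hw
      exact (mob_differentiableAt ha
        (hFtmem ζ hζ w (mem_ball_zero_iff.1 hw))).comp_differentiableWithinAt w
        (hsliced ζ hζ w hw)
    have hgm : MapsTo g (ball (0 : ℂ) 1) (ball (g 0) 1) := by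
      intro w hw
      rw [hg0, mem_ball_zero_iff]
      exact mob_mem ha (hFtmem ζ hζ w (mem_ball_zero_iff.1 hw))
    have hgderiv : HasDerivAt g ((1 - (starRingEnd ℂ) a * a)⁻¹ * β ζ) 0 :=
      HasDerivAt.comp (h₂ := mob a) 0 (mob_hasDerivAt ha) (hβderiv ζ hζ)
    have hnorm : ‖deriv g 0‖ ≤ 1 := by
      have h := Complex.norm_dslope_le_div_of_mapsTo_ball hgd (hgm.mono_right ball_subset_closedBall)
        (mem_ball_self one_pos)
      rw [dslope_same] at h
      simpa using h
    have hderiv_eq : deriv g 0 = (1 - (starRingEnd ℂ) a * a)⁻¹ * β ζ := hgderiv.deriv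
    have hden : (1 : ℂ) - (starRingEnd ℂ) a * a ≠ 0 := mob_den_ne ha ha
    have hβeq : β ζ = (1 - (starRingEnd ℂ) a * a) * deriv g 0 := by
      rw [hderiv_eq]; field_simp
    rw [hβeq, norm_mul, norm_one_sub_conj_mul_self ha]
    have h1 := normSq_lt_one ha
    nlinarith [norm_nonneg (deriv g 0)]
  -- β is a locally uniform limit of difference quotients along any line
  have hq0 : ∀ ζ ∈ polyDisk n, dslope (fun w => Ft (ζ, w)) 0 0 = β ζ := by
    intro ζ hζ
    rw [dslope_same]
    exact (hβderiv ζ hζ).deriv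
  have hkey : ∀ ζ ∈ polyDisk n, ∀ w : ℂ, ‖w‖ < 1 →
      dist (dslope (fun w' => Ft (ζ, w')) 0 w) (β ζ) ≤ 5 * ‖w‖ := by
    intro ζ hζ w hw
    set q := dslope (fun w' => Ft (ζ, w')) 0 with hqdef
    have hqd : DifferentiableOn ℂ q (ball (0 : ℂ) 1) :=
      (differentiableOn_dslope (ball_mem_nhds _ one_pos)).mpr (hsliced ζ hζ)
    have hq2 : ∀ v ∈ ball (0 : ℂ) 1, ‖q v‖ ≤ 2 := by
      intro v hv
      have hmaps2 : MapsTo (fun w' => Ft (ζ, w')) (ball (0 : ℂ) 1) (ball (Ft (ζ, 0)) 2) := by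
        intro u hu
        rw [mem_ball]
        have h1 := hFtmem ζ hζ u (mem_ball_zero_iff.1 hu)
        have h2 := hFtmem ζ hζ 0 (by norm_num)
        calc dist (Ft (ζ, u)) (Ft (ζ, 0)) ≤ ‖Ft (ζ, u)‖ + ‖Ft (ζ, 0)‖ :=
          dist_le_norm_add_norm _ _
        _ < 2 := by linarith
      have := Complex.norm_dslope_le_div_of_mapsTo_ball (hsliced ζ hζ) (hmaps2.mono_right ball_subset_closedBall) hv
      simpa using this
    have hqmaps : MapsTo q (ball (0 : ℂ) 1) (ball (q 0) 5) := by
      intro v hv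
      rw [mem_ball]
      have h1 := hq2 v hv
      have h2 := hq2 0 (mem_ball_self one_pos)
      calc dist (q v) (q 0) ≤ ‖q v‖ + ‖q 0‖ := dist_le_norm_add_norm _ _
      _ < 5 := by linarith
    have h := Complex.dist_le_div_mul_dist_of_mapsTo_ball hqd (hqmaps.mono_right ball_subset_closedBall) (mem_ball_zero_iff.2 hw)
    have hq0' : q 0 = β ζ := hq0 ζ hζ
    rw [hq0', dist_zero_right] at h
    calc dist (q w) (β ζ) ≤ 5 / 1 * ‖w‖ := h
    _ = 5 * ‖w‖ := by ring
  -- maximum modulus along lines: β ≡ 1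
  have hβone : ∀ ζ ∈ polyDisk n, β ζ = 1 := by
    intro ζ₀ hζ₀
    set L : ℂ → (Fin n → ℂ) := fun lam => z + lam • (ζ₀ - z) with hLdef
    have hL0 : L 0 = z := by simp [hLdef]
    have hL1 : L 1 = ζ₀ := by simp [hLdef]
    have hLd : Differentiable ℂ L := by
      have : Differentiable ℂ (fun lam : ℂ => lam • (ζ₀ - z)) :=
        differentiable_id.smul_const (ζ₀ - z)
      exact this.const_add z
    set U : Set ℂ := L ⁻¹' polyDisk n with hUdef
    have hUopen : IsOpen U := (isOpen_polyDisk n).preimage hLd.continuous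
    have hU0 : (0 : ℂ) ∈ U := by
      rw [hUdef, mem_preimage, hL0]; exact hz
    have hU1 : (1 : ℂ) ∈ U := by
      rw [hUdef, mem_preimage, hL1]; exact hζ₀
    have hUconv : Convex ℝ U := by
      intro x hx y hy a b ha hb hab
      rw [hUdef, mem_preimage] at hx hy ⊢
      have hab' : (a : ℂ) + (b : ℂ) = 1 := by exact_mod_cast hab
      have haff : L (a • x + b • y) = a • L x + b • L y := by
        funext i
        simp only [hLdef, Pi.add_apply, Pi.smul_apply, Pi.sub_apply, smul_eq_mul,
          Complex.real_smul]
        linear_combination (-(z i)) * hab'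
      rw [haff]
      exact convex_polyDisk n hx hy ha hb hab
    have hcompL : ∀ v : ℂ, ‖v‖ < 1 → DifferentiableOn ℂ (fun lam => Ft (L lam, v)) U := by
      intro v hv lam hlam
      rw [hUdef, mem_preimage] at hlam
      have hmem : ((L lam, v) : (Fin n → ℂ) × ℂ) ∈ S :=
        Set.mk_mem_prod hlam (mem_ball_zero_iff.2 hv)
      exact ((hFtAt _ hmem).comp lam
        ((hLd lam).prodMk (differentiableAt_const v))).differentiableWithinAt
    have hbL : DifferentiableOn ℂ (fun lam => β (L lam)) U := by
      refine TendstoLocallyUniformlyOn.differentiableOn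
        (F := fun (w : ℂ) (lam : ℂ) => dslope (fun w' => Ft (L lam, w')) 0 w)
        (φ := 𝓝[≠] (0 : ℂ)) ?_ ?_ hUopen
      · apply TendstoUniformlyOn.tendstoLocallyUniformlyOn
        rw [Metric.tendstoUniformlyOn_iff]
        intro ε hε
        have hδpos : (0 : ℝ) < min (ε / 6) (1 / 2) := by positivity
        filter_upwards [nhdsWithin_le_nhds (Metric.ball_mem_nhds (0 : ℂ) hδpos)] with w hw
        intro lam hlam
        rw [mem_ball_zero_iff] at hw
        have hw1 : ‖w‖ < 1 := lt_of_lt_of_le hw ((min_le_right _ _).trans (by norm_num))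
        have hlam' : L lam ∈ polyDisk n := hlam
        have h := hkey (L lam) hlam' w hw1
        rw [dist_comm] at h
        have : 5 * ‖w‖ < ε := by
          have := lt_of_lt_of_le hw (min_le_left _ _)
          nlinarith [norm_nonneg w]
        exact lt_of_le_of_lt h this
      · have hball : ∀ᶠ w in 𝓝[≠] (0 : ℂ), ‖w‖ < 1 ∧ w ≠ 0 := by
          filter_upwards [nhdsWithin_le_nhds (Metric.ball_mem_nhds (0 : ℂ) one_pos),
            self_mem_nhdsWithin] with w h1 h2
          exact ⟨mem_ball_zero_iff.1 h1, h2⟩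
        filter_upwards [hball] with w hw
        obtain ⟨hw1, hwne⟩ := hw
        have heq : (fun lam => dslope (fun w' => Ft (L lam, w')) 0 w)
            = (fun lam => (Ft (L lam, w) - Ft (L lam, 0)) / w) := by
          funext lam
          rw [dslope_of_ne _ hwne, slope_def_field, sub_zero]
        rw [heq]
        exact (((hcompL w hw1).sub (hcompL 0 (by norm_num))).div_const w)
    have hmax : IsMaxOn (norm ∘ fun lam => β (L lam)) U 0 := by
      intro lam hlam
      have hlam' : L lam ∈ polyDisk n := hlam
      simp only [Function.comp_apply, mem_setOf_eq, hL0, hβz, norm_one]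
      have h := hβle (L lam) hlam'
      nlinarith [normSq_nonneg (Ft (L lam, 0))]
    have hconst := Complex.eqOn_of_isPreconnected_of_isMaxOn_norm
      hUconv.isPreconnected hUopen hbL hU0 hmax
    have h1 := hconst hU1
    simp only [Function.const_apply, hL0, hL1, hβz] at h1
    exact h1
  -- Ft (ζ, 0) = 0 for all ζ
  have hFt0 : ∀ ζ ∈ polyDisk n, Ft (ζ, 0) = 0 := by
    intro ζ hζ
    have h := hβle ζ hζ
    rw [hβone ζ hζ, norm_one] at h
    have := normSq_nonneg (Ft (ζ, 0))
    have : normSq (Ft (ζ, 0)) = 0 := by linarith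
    exact normSq_eq_zero.1 this
  -- Ft is the identity fiberwise
  have hFtid : ∀ ζ ∈ polyDisk n, ∀ w ∈ ball (0 : ℂ) 1, Ft (ζ, w) = w := by
    intro ζ hζ
    have hds : dslope (fun w => Ft (ζ, w)) 0 0 = 1 := by
      rw [dslope_same, (hβderiv ζ hζ).deriv]
      exact hβone ζ hζ
    have hEq := Complex.affine_of_mapsTo_ball_of_exists_norm_dslope_eq_div
      (hsliced ζ hζ) ((hmapsz ζ hζ (hFt0 ζ hζ)).mono_right ball_subset_closedBall) (mem_ball_self one_pos)
      (by rw [hds]; norm_num)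
    intro w hw
    have := hEq hw
    simp only [hds, hFt0 ζ hζ, sub_zero, smul_eq_mul, mul_one, zero_add] at this
    exact this
  -- F is the identity in the second variable
  have hFid : ∀ ζ ∈ polyDisk n, ∀ w ∈ ball (0 : ℂ) 1, F (ζ, w) = w := by
    intro ζ hζ w hwmem
    have hw : ‖w‖ < 1 := mem_ball_zero_iff.1 hwmem
    have h1 : Ft (ζ, mob w₁ w) = mob w₁ w :=
      hFtid ζ hζ _ (mem_ball_zero_iff.2 (mob_mem hw₁ hw))
    rw [hFtdef] at h1
    simp only [mob_mob hw₁ hw] at h1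
    have hFw : ‖F (ζ, w)‖ < 1 :=
      mem_ball_zero_iff.1 (hmap (Set.mk_mem_prod hζ hwmem))
    calc F (ζ, w) = mob (-w₁) (mob w₁ (F (ζ, w))) := (mob_mob hw₁ hFw).symm
    _ = mob (-w₁) (mob w₁ w) := by rw [h1]
    _ = w := mob_mob hw₁ hw
  exact hnotaut ⟨id, ⟨differentiableOn_id, mapsTo_id _, id, differentiableOn_id, mapsTo_id _,
    fun w _ => rfl, fun w _ => rfl⟩, fun ζ hζ w hw => hFid ζ hζ w hw⟩
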